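/- Let n ≥ 2, let g be a real symmetric positive-definite n×n matrix with inverse g⁻¹, let y ∈ ℝⁿ with y ≠ 0, set a = g·y and t = (1/2)·yᵀ·g·y. Let c₁, c₂, c₃, d₁, d₂, d₃ ∈ ℝ satisfy c₁c₂ − c₃² ≠ 0, c₂ + 2d₂t ≠ 0, and (c₁+2d₁t)(c₂+2d₂t) − (c₃+2d₃t)² ≠ 0, and define G_α = c_α·g + d_α·(a·aᵀ) for α = 1, 2, 3. Then the symmetric 2n×2n block matrix [[G₁, G₃], [G₃, G₂]] is invertible, and there exist unique real numbers p₁, p₂, p₃, q₁, q₂, q₃ such that its inverse is the block matrix [[H₁, H₃], [H₃, H₂]] with H_α = p_α·g⁻¹ + q_α·(y·yᵀ) for α = 1, 2, 3. -/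

import Mathlib

open Matrix

section Helpers

variable {n : ℕ}

lemma mul_vecMulVec' (M : Matrix (Fin n) (Fin n) ℝ) (u v : Fin n → ℝ) :
    M * vecMulVec u v = vecMulVec (M.mulVec u) v := by
  ext i j
  simp only [mul_apply, vecMulVec_apply, mulVec, dotProduct, Finset.sum_mul]
  exact Finset.sum_congr rfl fun k _ => by ring

lemma vecMulVec_mul' (M : Matrix (Fin n) (Fin n) ℝ) (u v : Fin n → ℝ) :
    vecMulVec u v * M = vecMulVec u (M.vecMul v) := by
  ext i j
  simp only [mul_apply, vecMulVec_apply, vecMul, dotProduct, Finset.mul_sum]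
  exact Finset.sum_congr rfl fun k _ => by ring

lemma vecMulVec_mul_vecMulVec' (u v w z : Fin n → ℝ) :
    vecMulVec u v * vecMulVec w z = (v ⬝ᵥ w) • vecMulVec u z := by
  ext i j
  simp only [mul_apply, vecMulVec_apply, Matrix.smul_apply, dotProduct, Finset.sum_mul,
    smul_eq_mul]
  exact Finset.sum_congr rfl fun k _ => by ring

lemma trace_vecMulVec' (u v : Fin n → ℝ) :
    (vecMulVec u v).trace = u ⬝ᵥ v := by
  simp [Matrix.trace, vecMulVec_apply, dotProduct, Matrix.diag]

set_option maxHeartbeats 2000000 in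
private lemma sc_e1 (c₁ c₂ c₃ d₁ d₂ d₃ t : ℝ)
    (hDne : c₁ * c₂ - c₃ ^ 2 ≠ 0)
    (hD'ne : (c₁ + 2 * d₁ * t) * (c₂ + 2 * d₂ * t) - (c₃ + 2 * d₃ * t) ^ 2 ≠ 0) :
    c₁ * (c₂ / (c₁ * c₂ - c₃ ^ 2)) + c₃ * (-c₃ / (c₁ * c₂ - c₃ ^ 2)) = 1 := by
  field_simp
  ring

set_option maxHeartbeats 2000000 in
private lemma sc_e3 (c₁ c₂ c₃ d₁ d₂ d₃ t : ℝ)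
    (hDne : c₁ * c₂ - c₃ ^ 2 ≠ 0)
    (hD'ne : (c₁ + 2 * d₁ * t) * (c₂ + 2 * d₂ * t) - (c₃ + 2 * d₃ * t) ^ 2 ≠ 0) :
    c₁ * (-c₃ / (c₁ * c₂ - c₃ ^ 2)) + c₃ * (c₁ / (c₁ * c₂ - c₃ ^ 2)) = 0 := by
  field_simp
  ring

set_option maxHeartbeats 2000000 in
private lemma sc_e5 (c₁ c₂ c₃ d₁ d₂ d₃ t : ℝ)
    (hDne : c₁ * c₂ - c₃ ^ 2 ≠ 0)
    (hD'ne : (c₁ + 2 * d₁ * t) * (c₂ + 2 * d₂ * t) - (c₃ + 2 * d₃ * t) ^ 2 ≠ 0) :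
    c₃ * (c₂ / (c₁ * c₂ - c₃ ^ 2)) + c₂ * (-c₃ / (c₁ * c₂ - c₃ ^ 2)) = 0 := by
  field_simp
  ring

set_option maxHeartbeats 2000000 in
private lemma sc_e7 (c₁ c₂ c₃ d₁ d₂ d₃ t : ℝ)
    (hDne : c₁ * c₂ - c₃ ^ 2 ≠ 0)
    (hD'ne : (c₁ + 2 * d₁ * t) * (c₂ + 2 * d₂ * t) - (c₃ + 2 * d₃ * t) ^ 2 ≠ 0) :
    c₃ * (-c₃ / (c₁ * c₂ - c₃ ^ 2)) + c₂ * (c₁ / (c₁ * c₂ - c₃ ^ 2)) = 1 := by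
  field_simp
  ring

set_option maxHeartbeats 2000000 in
private lemma sc_e2 (c₁ c₂ c₃ d₁ d₂ d₃ t : ℝ)
    (hDne : c₁ * c₂ - c₃ ^ 2 ≠ 0)
    (hD'ne : (c₁ + 2 * d₁ * t) * (c₂ + 2 * d₂ * t) - (c₃ + 2 * d₃ * t) ^ 2 ≠ 0) :
    (c₁ * (((c₂ + 2 * d₂ * t) * (-(d₁ * (c₂ / (c₁ * c₂ - c₃ ^ 2)) + d₃ * (-c₃ / (c₁ * c₂ - c₃ ^ 2)))) - (c₃ + 2 * d₃ * t) * (-(d₃ * (c₂ / (c₁ * c₂ - c₃ ^ 2)) + d₂ * (-c₃ / (c₁ * c₂ - c₃ ^ 2))))) / ((c₁ + 2 * d₁ * t) * (c₂ + 2 * d₂ * t) - (c₃ + 2 * d₃ * t) ^ 2)) + d₁ * (c₂ / (c₁ * c₂ - c₃ ^ 2)) + 2 * t * (d₁ * (((c₂ + 2 * d₂ * t) * (-(d₁ * (c₂ / (c₁ * c₂ - c₃ ^ 2)) + d₃ * (-c₃ / (c₁ * c₂ - c₃ ^ 2)))) - (c₃ + 2 * d₃ * t) * (-(d₃ * (c₂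 / (c₁ * c₂ - c₃ ^ 2)) + d₂ * (-c₃ / (c₁ * c₂ - c₃ ^ 2))))) / ((c₁ + 2 * d₁ * t) * (c₂ + 2 * d₂ * t) - (c₃ + 2 * d₃ * t) ^ 2)))) + (c₃ * (((c₁ + 2 * d₁ * t) * (-(d₃ * (c₂ / (c₁ * c₂ - c₃ ^ 2)) + d₂ * (-c₃ / (c₁ * c₂ - c₃ ^ 2)))) - (c₃ + 2 * d₃ * t) * (-(d₁ * (c₂ / (c₁ * c₂ - c₃ ^ 2)) + d₃ * (-c₃ / (c₁ * c₂ - c₃ ^ 2))))) / ((c₁ + 2 * d₁ * t) * (c₂ + 2 * d₂ * t) - (c₃ + 2 * d₃ * t) ^ 2)) + d₃ * (-c₃ / (c₁ * c₂ - c₃ ^ 2)) + 2 * t * (d₃ * (((c₁ + 2 * d₁ * t) * (-(d₃ * (c₂ / (c₁ * c₂ - c₃ ^ 2)) + d₂ * (-c₃ / (c₁ * c₂ - c₃ ^ 2)))) - (c₃ + 2 * d₃ * t) * (-(d₁ * (c₂ / (c₁ * c₂ - c₃ ^ 2)) + d₃ * (-c₃ / (c₁ * c₂ - c₃ ^ 2)))))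 / ((c₁ + 2 * d₁ * t) * (c₂ + 2 * d₂ * t) - (c₃ + 2 * d₃ * t) ^ 2)))) = 0 := by
  obtain ⟨E, hE⟩ : ∃ E, E = (c₁ + 2 * d₁ * t) * (c₂ + 2 * d₂ * t) - (c₃ + 2 * d₃ * t) ^ 2 := ⟨_, rfl⟩
  rw [← hE] at hD'ne ⊢
  field_simp
  rw [hE]
  ring

set_option maxHeartbeats 2000000 in
private lemma sc_e4 (c₁ c₂ c₃ d₁ d₂ d₃ t : ℝ)
    (hDne : c₁ * c₂ - c₃ ^ 2 ≠ 0)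
    (hD'ne : (c₁ + 2 * d₁ * t) * (c₂ + 2 * d₂ * t) - (c₃ + 2 * d₃ * t) ^ 2 ≠ 0) :
    (c₁ * (((c₁ + 2 * d₁ * t) * (-(d₃ * (c₂ / (c₁ * c₂ - c₃ ^ 2)) + d₂ * (-c₃ / (c₁ * c₂ - c₃ ^ 2)))) - (c₃ + 2 * d₃ * t) * (-(d₁ * (c₂ / (c₁ * c₂ - c₃ ^ 2)) + d₃ * (-c₃ / (c₁ * c₂ - c₃ ^ 2))))) / ((c₁ + 2 * d₁ * t) * (c₂ + 2 * d₂ * t) - (c₃ + 2 * d₃ * t) ^ 2)) + d₁ * (-c₃ / (c₁ * c₂ - c₃ ^ 2)) + 2 * t * (d₁ * (((c₁ + 2 * d₁ * t) * (-(d₃ * (c₂ / (c₁ * c₂ - c₃ ^ 2)) + d₂ * (-c₃ / (c₁ * c₂ - c₃ ^ 2)))) - (c₃ + 2 * d₃ * t) * (-(d₁ * (c₂ / (c₁ * c₂ - c₃ ^ 2)) + d₃ * (-c₃ / (c₁ * c₂ - c₃ ^ 2))))) / ((c₁ + 2 * d₁ * t) * (c₂ + 2 * d₂ * t) - (c₃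 + 2 * d₃ * t) ^ 2)))) + (c₃ * (((c₁ + 2 * d₁ * t) * (-(d₃ * (-c₃ / (c₁ * c₂ - c₃ ^ 2)) + d₂ * (c₁ / (c₁ * c₂ - c₃ ^ 2)))) - (c₃ + 2 * d₃ * t) * (-(d₁ * (-c₃ / (c₁ * c₂ - c₃ ^ 2)) + d₃ * (c₁ / (c₁ * c₂ - c₃ ^ 2))))) / ((c₁ + 2 * d₁ * t) * (c₂ + 2 * d₂ * t) - (c₃ + 2 * d₃ * t) ^ 2)) + d₃ * (c₁ / (c₁ * c₂ - c₃ ^ 2)) + 2 * t * (d₃ * (((c₁ + 2 * d₁ * t) * (-(d₃ * (-c₃ / (c₁ * c₂ - c₃ ^ 2)) + d₂ * (c₁ / (c₁ * c₂ - c₃ ^ 2)))) - (c₃ + 2 * d₃ * t) * (-(d₁ * (-c₃ / (c₁ * c₂ - c₃ ^ 2)) + d₃ * (c₁ / (c₁ * c₂ - c₃ ^ 2))))) / ((c₁ + 2 * d₁ * t) * (c₂ + 2 * d₂ * t) - (c₃ + 2 * d₃ * t) ^ 2)))) = 0 := by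
  obtain ⟨E, hE⟩ : ∃ E, E = (c₁ + 2 * d₁ * t) * (c₂ + 2 * d₂ * t) - (c₃ + 2 * d₃ * t) ^ 2 := ⟨_, rfl⟩
  rw [← hE] at hD'ne ⊢
  field_simp
  rw [hE]
  ring

set_option maxHeartbeats 2000000 in
private lemma sc_e6 (c₁ c₂ c₃ d₁ d₂ d₃ t : ℝ)
    (hDne : c₁ * c₂ - c₃ ^ 2 ≠ 0)
    (hD'ne : (c₁ + 2 * d₁ * t) * (c₂ + 2 * d₂ * t) - (c₃ + 2 * d₃ * t) ^ 2 ≠ 0) :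
    (c₃ * (((c₂ + 2 * d₂ * t) * (-(d₁ * (c₂ / (c₁ * c₂ - c₃ ^ 2)) + d₃ * (-c₃ / (c₁ * c₂ - c₃ ^ 2)))) - (c₃ + 2 * d₃ * t) * (-(d₃ * (c₂ / (c₁ * c₂ - c₃ ^ 2)) + d₂ * (-c₃ / (c₁ * c₂ - c₃ ^ 2))))) / ((c₁ + 2 * d₁ * t) * (c₂ + 2 * d₂ * t) - (c₃ + 2 * d₃ * t) ^ 2)) + d₃ * (c₂ / (c₁ * c₂ - c₃ ^ 2)) + 2 * t * (d₃ * (((c₂ + 2 * d₂ * t) * (-(d₁ * (c₂ / (c₁ * c₂ - c₃ ^ 2)) + d₃ * (-c₃ / (c₁ * c₂ - c₃ ^ 2)))) - (c₃ + 2 * d₃ * t) * (-(d₃ * (c₂ / (c₁ * c₂ - c₃ ^ 2)) + d₂ * (-c₃ / (c₁ * c₂ - c₃ ^ 2))))) / ((c₁ + 2 * d₁ * t) * (c₂ + 2 * d₂ * t) - (c₃ + 2 * d₃ * t) ^ 2)))) + (c₂ * (((c₁ + 2 * d₁ * t) * (-(d₃ * (c₂ / (c₁ * c₂ - c₃ ^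 2)) + d₂ * (-c₃ / (c₁ * c₂ - c₃ ^ 2)))) - (c₃ + 2 * d₃ * t) * (-(d₁ * (c₂ / (c₁ * c₂ - c₃ ^ 2)) + d₃ * (-c₃ / (c₁ * c₂ - c₃ ^ 2))))) / ((c₁ + 2 * d₁ * t) * (c₂ + 2 * d₂ * t) - (c₃ + 2 * d₃ * t) ^ 2)) + d₂ * (-c₃ / (c₁ * c₂ - c₃ ^ 2)) + 2 * t * (d₂ * (((c₁ + 2 * d₁ * t) * (-(d₃ * (c₂ / (c₁ * c₂ - c₃ ^ 2)) + d₂ * (-c₃ / (c₁ * c₂ - c₃ ^ 2)))) - (c₃ + 2 * d₃ * t) * (-(d₁ * (c₂ / (c₁ * c₂ - c₃ ^ 2)) + d₃ * (-c₃ / (c₁ * c₂ - c₃ ^ 2))))) / ((c₁ + 2 * d₁ * t) * (c₂ + 2 * d₂ * t) - (c₃ + 2 * d₃ * t) ^ 2)))) = 0 := by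
  obtain ⟨E, hE⟩ : ∃ E, E = (c₁ + 2 * d₁ * t) * (c₂ + 2 * d₂ * t) - (c₃ + 2 * d₃ * t) ^ 2 := ⟨_, rfl⟩
  rw [← hE] at hD'ne ⊢
  field_simp
  rw [hE]
  ring

set_option maxHeartbeats 2000000 in
private lemma sc_e8 (c₁ c₂ c₃ d₁ d₂ d₃ t : ℝ)
    (hDne : c₁ * c₂ - c₃ ^ 2 ≠ 0)
    (hD'ne : (c₁ + 2 * d₁ * t) * (c₂ + 2 * d₂ * t) - (c₃ + 2 * d₃ * t) ^ 2 ≠ 0) :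
    (c₃ * (((c₁ + 2 * d₁ * t) * (-(d₃ * (c₂ / (c₁ * c₂ - c₃ ^ 2)) + d₂ * (-c₃ / (c₁ * c₂ - c₃ ^ 2)))) - (c₃ + 2 * d₃ * t) * (-(d₁ * (c₂ / (c₁ * c₂ - c₃ ^ 2)) + d₃ * (-c₃ / (c₁ * c₂ - c₃ ^ 2))))) / ((c₁ + 2 * d₁ * t) * (c₂ + 2 * d₂ * t) - (c₃ + 2 * d₃ * t) ^ 2)) + d₃ * (-c₃ / (c₁ * c₂ - c₃ ^ 2)) + 2 * t * (d₃ * (((c₁ + 2 * d₁ * t) * (-(d₃ * (c₂ / (c₁ * c₂ - c₃ ^ 2)) + d₂ * (-c₃ / (c₁ * c₂ - c₃ ^ 2)))) - (c₃ + 2 * d₃ * t) * (-(d₁ * (c₂ / (c₁ * c₂ - c₃ ^ 2)) + d₃ * (-c₃ / (c₁ * c₂ - c₃ ^ 2))))) / ((c₁ + 2 * d₁ * t) * (c₂ + 2 * d₂ * t) - (c₃ + 2 * d₃ * t) ^ 2)))) + (c₂ * (((c₁ + 2 * d₁ * t) * (-(d₃ * (-c₃ / (c₁ * c₂ - c₃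 ^ 2)) + d₂ * (c₁ / (c₁ * c₂ - c₃ ^ 2)))) - (c₃ + 2 * d₃ * t) * (-(d₁ * (-c₃ / (c₁ * c₂ - c₃ ^ 2)) + d₃ * (c₁ / (c₁ * c₂ - c₃ ^ 2))))) / ((c₁ + 2 * d₁ * t) * (c₂ + 2 * d₂ * t) - (c₃ + 2 * d₃ * t) ^ 2)) + d₂ * (c₁ / (c₁ * c₂ - c₃ ^ 2)) + 2 * t * (d₂ * (((c₁ + 2 * d₁ * t) * (-(d₃ * (-c₃ / (c₁ * c₂ - c₃ ^ 2)) + d₂ * (c₁ / (c₁ * c₂ - c₃ ^ 2)))) - (c₃ + 2 * d₃ * t) * (-(d₁ * (-c₃ / (c₁ * c₂ - c₃ ^ 2)) + d₃ * (c₁ / (c₁ * c₂ - c₃ ^ 2))))) / ((c₁ + 2 * d₁ * t) * (c₂ + 2 * d₂ * t) - (c₃ + 2 * d₃ * t) ^ 2)))) = 0 := by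
  obtain ⟨E, hE⟩ : ∃ E, E = (c₁ + 2 * d₁ * t) * (c₂ + 2 * d₂ * t) - (c₃ + 2 * d₃ * t) ^ 2 := ⟨_, rfl⟩
  rw [← hE] at hD'ne ⊢
  field_simp
  rw [hE]
  ring


end Helpers

set_option maxHeartbeats 1000000

/-- The block matrix `[[G₁, G₃], [G₃, G₂]]` of the general natural lifted metric
(with `Gα = cα·g + dα·(a·aᵀ)`, `a = g·y`, `y ≠ 0`, `n ≥ 2`) is invertible, and its
inverse has blocks of the same natural form `Hα = pα·g⁻¹ + qα·(y·yᵀ)` for a unique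
choice of real numbers `p₁, p₂, p₃, q₁, q₂, q₃`. -/
theorem inverse_metric_natural_form {n : ℕ} (hn : 2 ≤ n)
    (g : Matrix (Fin n) (Fin n) ℝ) (hg : g.PosDef)
    (y : Fin n → ℝ) (hy : y ≠ 0)
    (a : Fin n → ℝ) (ha : a = g.mulVec y)
    (t : ℝ) (ht : t = (1 / 2) * (y ⬝ᵥ g.mulVec y))
    (c₁ c₂ c₃ d₁ d₂ d₃ : ℝ)
    (h1 : c₁ * c₂ - c₃ ^ 2 ≠ 0) (h2 : c₂ + 2 * d₂ * t ≠ 0)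
    (h3 : (c₁ + 2 * d₁ * t) * (c₂ + 2 * d₂ * t) - (c₃ + 2 * d₃ * t) ^ 2 ≠ 0)
    (G₁ G₂ G₃ : Matrix (Fin n) (Fin n) ℝ)
    (hG₁ : G₁ = c₁ • g + d₁ • vecMulVec a a)
    (hG₂ : G₂ = c₂ • g + d₂ • vecMulVec a a)
    (hG₃ : G₃ = c₃ • g + d₃ • vecMulVec a a) :
    IsUnit (fromBlocks G₁ G₃ G₃ G₂) ∧
    ∃! pq : ℝ × ℝ × ℝ × ℝ × ℝ × ℝ,
      (fromBlocks G₁ G₃ G₃ G₂)⁻¹ =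
        fromBlocks
          (pq.1 • g⁻¹ + pq.2.2.2.1 • vecMulVec y y)
          (pq.2.2.1 • g⁻¹ + pq.2.2.2.2.2 • vecMulVec y y)
          (pq.2.2.1 • g⁻¹ + pq.2.2.2.2.2 • vecMulVec y y)
          (pq.2.1 • g⁻¹ + pq.2.2.2.2.1 • vecMulVec y y) := by
  have hgsym : gᵀ = g := by
    ext i j
    simpa using hg.1.apply i j
  have hdet : IsUnit g.det := hg.det_pos.ne'.isUnit
  have hgi : g * g⁻¹ = 1 := Matrix.mul_nonsing_inv g hdet
  have h2t : 0 < y ⬝ᵥ g.mulVec y := by simpa using hg.dotProduct_mulVec_pos hy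
  have h2t' : y ⬝ᵥ g.mulVec y = 2 * t := by rw [ht]; ring
  have htpos : 0 < 2 * t := h2t' ▸ h2t
  set Y : Matrix (Fin n) (Fin n) ℝ := vecMulVec y y with hYdef
  have hga : g.mulVec y = g.vecMul y := by
    conv_lhs => rw [← hgsym]
    rw [Matrix.mulVec_transpose]
  have hYg : Y * g = vecMulVec y a := by
    rw [hYdef, vecMulVec_mul', ha, hga]
  have haa : vecMulVec a a = g * (Y * g) := by
    rw [hYg, mul_vecMulVec', ← ha]
  set W : Matrix (Fin n) (Fin n) ℝ := g * (Y * g) with hWdef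
  set Z : Matrix (Fin n) (Fin n) ℝ := g * Y with hZdef
  have hay : a ⬝ᵥ y = 2 * t := by
    rw [ha, dotProduct_comm, h2t']
  have hya : y ⬝ᵥ a = 2 * t := by rw [dotProduct_comm, hay]
  have hWgi : W * g⁻¹ = Z := by
    rw [hWdef, hZdef, Matrix.mul_assoc, Matrix.mul_assoc, hgi, Matrix.mul_one]
  have hWY : W * Y = (2 * t) • Z := by
    rw [hWdef, Matrix.mul_assoc, hYg, hYdef, vecMulVec_mul_vecMulVec', hay,
      Matrix.mul_smul, mul_vecMulVec', ← ha, hZdef, mul_vecMulVec', ← ha]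
  have key : ∀ c d p q : ℝ,
      (c • g + d • W) * (p • g⁻¹ + q • Y) =
        (c * p) • (1 : Matrix (Fin n) (Fin n) ℝ) + (c * q + d * p + 2 * t * (d * q)) • Z := by
    intro c d p q
    rw [Matrix.add_mul, Matrix.mul_add, Matrix.mul_add]
    rw [smul_mul_smul_comm, smul_mul_smul_comm, smul_mul_smul_comm, smul_mul_smul_comm]
    rw [hgi, hWgi, hWY, ← hZdef]
    rw [smul_smul]
    module
  have blockeq : ∀ cA dA cB dB pA qA pB qB : ℝ,
      (cA • g + dA • W) * (pA • g⁻¹ + qA • Y) + (cB • g + dB • W) * (pB • g⁻¹ + qB • Y) =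
        (cA * pA + cB * pB) • (1 : Matrix (Fin n) (Fin n) ℝ) +
          ((cA * qA + dA * pA + 2 * t * (dA * qA)) +
            (cB * qB + dB * pB + 2 * t * (dB * qB))) • Z := by
    intro cA dA cB dB pA qA pB qB
    rw [key, key]
    module
  set p₁ : ℝ := (c₂ / (c₁ * c₂ - c₃ ^ 2)) with hp₁
  set p₂ : ℝ := (c₁ / (c₁ * c₂ - c₃ ^ 2)) with hp₂
  set p₃ : ℝ := (-c₃ / (c₁ * c₂ - c₃ ^ 2)) with hp₃
  set q₁ : ℝ := (((c₂ + 2 * d₂ * t) * (-(d₁ * (c₂ / (c₁ * c₂ - c₃ ^ 2)) + d₃ * (-c₃ / (c₁ * c₂ - c₃ ^ 2)))) - (c₃ + 2 * d₃ * t) * (-(d₃ * (c₂ / (c₁ * c₂ - c₃ ^ 2)) + d₂ * (-c₃ / (c₁ * c₂ - c₃ ^ 2))))) / ((c₁ + 2 * d₁ * t) * (c₂ + 2 * d₂ * t) - (c₃ + 2 * d₃ * t) ^ 2)) with hq₁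
  set q₂ : ℝ := (((c₁ + 2 * d₁ * t) * (-(d₃ * (-c₃ / (c₁ * c₂ - c₃ ^ 2)) + d₂ * (c₁ / (c₁ * c₂ - c₃ ^ 2)))) - (c₃ + 2 * d₃ * t) * (-(d₁ * (-c₃ / (c₁ * c₂ - c₃ ^ 2)) + d₃ * (c₁ / (c₁ * c₂ - c₃ ^ 2))))) / ((c₁ + 2 * d₁ * t) * (c₂ + 2 * d₂ * t) - (c₃ + 2 * d₃ * t) ^ 2)) with hq₂
  set q₃ : ℝ := (((c₁ + 2 * d₁ * t) * (-(d₃ * (c₂ / (c₁ * c₂ - c₃ ^ 2)) + d₂ * (-c₃ / (c₁ * c₂ - c₃ ^ 2)))) - (c₃ + 2 * d₃ * t) * (-(d₁ * (c₂ / (c₁ * c₂ - c₃ ^ 2)) + d₃ * (-c₃ / (c₁ * c₂ - c₃ ^ 2))))) / ((c₁ + 2 * d₁ * t) * (c₂ + 2 * d₂ * t) - (c₃ + 2 * d₃ * t) ^ 2)) with hq₃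
  have e1 : c₁ * p₁ + c₃ * p₃ = 1 := by
    rw [hp₁, hp₃]; exact sc_e1 c₁ c₂ c₃ d₁ d₂ d₃ t h1 h3
  have e3 : c₁ * p₃ + c₃ * p₂ = 0 := by
    rw [hp₂, hp₃]; exact sc_e3 c₁ c₂ c₃ d₁ d₂ d₃ t h1 h3
  have e5 : c₃ * p₁ + c₂ * p₃ = 0 := by
    rw [hp₁, hp₃]; exact sc_e5 c₁ c₂ c₃ d₁ d₂ d₃ t h1 h3
  have e7 : c₃ * p₃ + c₂ * p₂ = 1 := by
    rw [hp₂, hp₃]; exact sc_e7 c₁ c₂ c₃ d₁ d₂ d₃ t h1 h3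
  have e2 : (c₁ * q₁ + d₁ * p₁ + 2 * t * (d₁ * q₁)) +
      (c₃ * q₃ + d₃ * p₃ + 2 * t * (d₃ * q₃)) = 0 := by
    rw [hq₁, hq₃, hp₁, hp₃]; exact sc_e2 c₁ c₂ c₃ d₁ d₂ d₃ t h1 h3
  have e4 : (c₁ * q₃ + d₁ * p₃ + 2 * t * (d₁ * q₃)) +
      (c₃ * q₂ + d₃ * p₂ + 2 * t * (d₃ * q₂)) = 0 := by
    rw [hq₂, hq₃, hp₂, hp₃]; exact sc_e4 c₁ c₂ c₃ d₁ d₂ d₃ t h1 h3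
  have e6 : (c₃ * q₁ + d₃ * p₁ + 2 * t * (d₃ * q₁)) +
      (c₂ * q₃ + d₂ * p₃ + 2 * t * (d₂ * q₃)) = 0 := by
    rw [hq₁, hq₃, hp₁, hp₃]; exact sc_e6 c₁ c₂ c₃ d₁ d₂ d₃ t h1 h3
  have e8 : (c₃ * q₃ + d₃ * p₃ + 2 * t * (d₃ * q₃)) +
      (c₂ * q₂ + d₂ * p₂ + 2 * t * (d₂ * q₂)) = 0 := by
    rw [hq₂, hq₃, hp₂, hp₃]; exact sc_e8 c₁ c₂ c₃ d₁ d₂ d₃ t h1 h3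
  set H₁ : Matrix (Fin n) (Fin n) ℝ := p₁ • g⁻¹ + q₁ • Y with hH₁
  set H₂ : Matrix (Fin n) (Fin n) ℝ := p₂ • g⁻¹ + q₂ • Y with hH₂
  set H₃ : Matrix (Fin n) (Fin n) ℝ := p₃ • g⁻¹ + q₃ • Y with hH₃
  have b11 : G₁ * H₁ + G₃ * H₃ = 1 := by
    rw [hG₁, hG₃, haa, hH₁, hH₃, blockeq, e1, e2]
    simp
  have b12 : G₁ * H₃ + G₃ * H₂ = 0 := by
    rw [hG₁, hG₃, haa, hH₃, hH₂, blockeq, e3, e4]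
    simp
  have b21 : G₃ * H₁ + G₂ * H₃ = 0 := by
    rw [hG₃, hG₂, haa, hH₁, hH₃, blockeq, e5, e6]
    simp
  have b22 : G₃ * H₃ + G₂ * H₂ = 1 := by
    rw [hG₃, hG₂, haa, hH₃, hH₂, blockeq, e7, e8]
    simp
  have hGH : fromBlocks G₁ G₃ G₃ G₂ * fromBlocks H₁ H₃ H₃ H₂ = 1 := by
    rw [Matrix.fromBlocks_multiply, b11, b12, b21, b22]
    exact Matrix.fromBlocks_one
  have hUnit : IsUnit (fromBlocks G₁ G₃ G₃ G₂) := by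
    rw [Matrix.isUnit_iff_isUnit_det]
    have hd : (fromBlocks G₁ G₃ G₃ G₂).det * (fromBlocks H₁ H₃ H₃ H₂).det = 1 := by
      rw [← Matrix.det_mul, hGH, Matrix.det_one]
    exact IsUnit.of_mul_eq_one _ hd
  have hInv : (fromBlocks G₁ G₃ G₃ G₂)⁻¹ = fromBlocks H₁ H₃ H₃ H₂ :=
    Matrix.inv_eq_right_inv hGH
  have hZtrace : Z.trace = 2 * t := by
    rw [hZdef, mul_vecMulVec', ← ha, trace_vecMulVec', hay]
  have hZZ : Z * Z = (2 * t) • Z := by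
    rw [hZdef, mul_vecMulVec', ← ha, vecMulVec_mul_vecMulVec', hya]
  have coeff_uniq : ∀ p q p' q' : ℝ,
      p • g⁻¹ + q • Y = p' • g⁻¹ + q' • Y → p = p' ∧ q = q' := by
    intro p q p' q' h
    have hmul : p • (1 : Matrix (Fin n) (Fin n) ℝ) + q • Z = p' • 1 + q' • Z := by
      have hgm := congrArg (fun M => g * M) h
      simpa only [Matrix.mul_add, Matrix.mul_smul, hgi, ← hZdef] using hgm
    have htr1 : p * n + q * (2 * t) = p' * n + q' * (2 * t) := by
      have h' := congrArg Matrix.trace hmul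
      simpa [Matrix.trace_add, Matrix.trace_smul, Matrix.trace_one, hZtrace,
        smul_eq_mul, mul_comm] using h'
    have htr2 : p * (2 * t) + q * (2 * t * (2 * t)) =
        p' * (2 * t) + q' * (2 * t * (2 * t)) := by
      have h' := congrArg (fun M => (M * Z).trace) hmul
      simpa [Matrix.add_mul, Matrix.smul_mul, Matrix.one_mul, hZZ, Matrix.trace_add,
        Matrix.trace_smul, hZtrace, smul_eq_mul, mul_assoc, mul_comm, mul_left_comm] using h'
    have h2tne : (2 * t) ≠ 0 := ne_of_gt htpos
    have hsum : p + q * (2 * t) = p' + q' * (2 * t) := by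
      have h4 : (p + q * (2 * t)) * (2 * t) = (p' + q' * (2 * t)) * (2 * t) := by
        nlinarith [htr2]
      exact mul_right_cancel₀ h2tne h4
    have hnn : (2 : ℝ) ≤ (n : ℝ) := by exact_mod_cast hn
    have hp : p = p' := by
      have hdiff : (p - p') * ((n : ℝ) - 1) = 0 := by nlinarith [htr1, hsum]
      rcases mul_eq_zero.mp hdiff with h' | h'
      · linarith
      · linarith
    refine ⟨hp, ?_⟩
    have hq' : q * (2 * t) = q' * (2 * t) := by rw [hp] at hsum; linarith
    exact mul_right_cancel₀ h2tne hq'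
  refine ⟨hUnit, ⟨(p₁, p₂, p₃, q₁, q₂, q₃), ?_, ?_⟩⟩
  · rw [hInv, hH₁, hH₂, hH₃]
  · rintro ⟨p₁', p₂', p₃', q₁', q₂', q₃'⟩ h'
    rw [hInv] at h'
    have h11 := congrArg Matrix.toBlocks₁₁ h'
    have h12 := congrArg Matrix.toBlocks₁₂ h'
    have h22 := congrArg Matrix.toBlocks₂₂ h'
    simp only [Matrix.toBlocks_fromBlocks₁₁, Matrix.toBlocks_fromBlocks₁₂,
      Matrix.toBlocks_fromBlocks₂₂] at h11 h12 h22
    rw [hH₁] at h11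
    rw [hH₃] at h12
    rw [hH₂] at h22
    obtain ⟨u1, u2⟩ := coeff_uniq _ _ _ _ h11
    obtain ⟨u3, u4⟩ := coeff_uniq _ _ _ _ h12
    obtain ⟨u5, u6⟩ := coeff_uniq _ _ _ _ h22
    simp [Prod.ext_iff, u1.symm, u2.symm, u3.symm, u4.symm, u5.symm, u6.symm]
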